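/- In an infinite sequential game where each inverse preference <_a⁻¹ is a strict well-order on O, for every agent a and node γ ∈ C* there exists a strategy profile μ such that g_a(γ, μ) equals the best guarantee G_a(γ) := ⋂_{s : C* → C} g_a(γ, s). That is, agents can secure their best possible guarantee at each node. -/

import Mathlib

variable {C A O : Type*}

/-- The prefix of length `n` of an infinite play. -/
def pref (p : ℕ → C) (n : ℕ) : List C := List.ofFn (fun i : Fin n => p (i : ℕ))

/-- Plays compatible with a partial strategy profile. -/
def Plays (s : List C → Option C) : Set (ℕ → C) :=
  {p | ∀ (n : ℕ) (c : C), s (pref p n) = some c → p n = c}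

/-- The history of length n induced by a total strategy profile. -/
def hist (t : List C → C) : ℕ → List C
  | 0 => []
  | n + 1 => hist t n ++ [t (hist t n)]

/-- The play induced by a total strategy profile: p(t)_n = t(p(t)_{<n}). -/
def play (t : List C → C) (n : ℕ) : C := t (hist t n)

open Classical in
/-- Restriction of a partial strategy profile to a set of histories. -/
noncomputable def restr (s : List C → Option C) (X : Set (List C)) (γ : List C) : Option C :=
  if γ ∈ X then s γ else none

/-- Restriction of a total strategy profile to a set of histories (as a partial one). -/
noncomputable def restrT (s : List C → C) (X : Set (List C)) : List C → Option C :=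
  restr (fun γ => some (s γ)) X

/-- γC^* : finite sequences extending γ. -/
def ext (γ : List C) : Set (List C) := {δ | γ <+: δ}

/-- γC^ω : infinite sequences extending γ. -/
def extω (γ : List C) : Set (ℕ → C) := {p | pref p γ.length = γ}


/-- A <ₐ-terminal interval. -/
def Terminal (lt : O → O → Prop) (I : Set O) : Prop := ∀ x y, lt x y → x ∈ I → y ∈ I

/-- The guarantee g_a(γ, s) of agent a at node γ under strategy profile s. -/
noncomputable def guar (d : List C → A) (v : (ℕ → C) → O) (lt : A → O → O → Prop)
    (a : A) (γ : List C) (s : List C → C) : Set O :=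
  {o | ∃ p ∈ Plays (restrT s {δ | δ ∈ ext γ ∧ d δ = a}) ∩ extω γ, lt a (v p) o ∨ v p = o}

/-- The best guarantee G_a(γ). -/
noncomputable def bestGuar (d : List C → A) (v : (ℕ → C) → O) (lt : A → O → O → Prop)
    (a : A) (γ : List C) : Set O :=
  ⋂ s : List C → C, guar d v lt a γ s

/-- Nash equilibrium of an infinite sequential game. -/
def NashEq (d : List C → A) (v : (ℕ → C) → O) (prec : A → O → O → Prop)
    (s : List C → C) : Prop :=
  ∀ (a : A) (s' : List C → C), (∀ γ, d γ ≠ a → s' γ = s γ) →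
    ¬ prec a (v (play s)) (v (play s'))

/-- Winning strategy for agent a (owning D) in ⟨C, D, W⟩. -/
def WinA (D : Set (List C)) (W : Set (ℕ → C)) (sa : List C → C) : Prop :=
  ∀ t : List C → C, (∀ γ ∈ D, t γ = sa γ) → play t ∈ W

/-- Winning strategy for agent b (owning C^* \ D) in ⟨C, D, W⟩. -/
def WinB (D : Set (List C)) (W : Set (ℕ → C)) (sb : List C → C) : Prop :=
  ∀ t : List C → C, (∀ γ ∉ D, t γ = sb γ) → play t ∉ W

/-- Determinacy of the two-agent win-lose game ⟨C, D, W⟩. -/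
def Determined (D : Set (List C)) (W : Set (ℕ → C)) : Prop :=
  (∃ sa, WinA D W sa) ∨ (∃ sb, WinB D W sb)

/-- If each inverse preference is a strict well-order, every agent
can secure his or her best guarantee at each node. -/
theorem best_guarantee_attained {C A O : Type*} [Nonempty C] [Nonempty A] [Nonempty O]
    (d : List C → A) (v : (ℕ → C) → O) (lt : A → O → O → Prop)
    (hwo : ∀ a, IsWellOrder O (fun x y => lt a y x)) :
    ∀ (a : A) (γ : List C), ∃ μ : List C → C,
      guar d v lt a γ μ = bestGuar d v lt a γ := by
  intro a γ
  by_cases hU : ∃ o : O, ∃ s : List C → C, o ∉ guar d v lt a γ s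
  · obtain ⟨M, hM, hmax⟩ := (hwo a).wf.has_min {o | ∃ s, o ∉ guar d v lt a γ s} hU
    obtain ⟨s₀, hs₀⟩ := hM
    refine ⟨s₀, Set.Subset.antisymm ?_ (Set.iInter_subset _ _)⟩
    intro o ho
    refine Set.mem_iInter.2 fun s => ?_
    by_contra hos
    have hnlt : ¬ lt a M o := hmax o ⟨s, hos⟩
    rcases (haveI := hwo a; trichotomous_of (fun x y => lt a y x) o M) with h | h | h
    · exact hnlt h
    · exact hs₀ (h ▸ ho)
    · obtain ⟨p, hp, hv⟩ := ho
      have hvM : lt a (v p) M := by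
        rcases hv with hv | hv
        · exact (haveI := hwo a; (inferInstance : IsTrans O (fun x y => lt a y x))).trans M o (v p) h hv
        · exact hv ▸ h
      exact hs₀ ⟨p, hp, Or.inl hvM⟩
  · push_neg at hU
    refine ⟨fun _ => Classical.arbitrary C, Set.Subset.antisymm ?_ (Set.iInter_subset _ _)⟩
    intro o _
    exact Set.mem_iInter.2 fun s => hU o s
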